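/- Let (X,c_i,c_j) be a digital picture in ℤ² with {i,j} = {1,2}. If X has no hole, then the row component graph R(X,c_i) is acyclic: there is no sequence r₁,…,r_k of k ≥ 3 distinct row components of X with r_t adjacent to r_{t+1} in R(X,c_i) for 1 ≤ t < k and r_k adjacent to r₁. -/

import Mathlib

/-- Points of the digital plane. -/
abbrev Pt : Type := ℤ × ℤ

/-- `c_i`-adjacency on `ℤ²` (for `i = 1` or `i = 2`). -/
def cAdj (i : ℕ) (x y : Pt) : Prop :=
  if i = 1 then |x.1 - y.1| + |x.2 - y.2| ≤ 1
  else |x.1 - y.1| ≤ 1 ∧ |x.2 - y.2| ≤ 1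

/-- The adjacency induced on a subset of `ℤ²`. -/
def subAdj (i : ℕ) (X : Set Pt) (x y : X) : Prop := cAdj i x.1 y.1

/-- Digital continuity of a map between digital images. -/
def DigCont {α β : Type} (κ : α → α → Prop) (δ : β → β → Prop) (f : α → β) : Prop :=
  ∀ x y, κ x y → δ (f x) (f y)

/-- The standard (`c_1`) adjacency on `ℕ`, used for digital intervals. -/
def natAdj (s t : ℕ) : Prop := s = t ∨ s + 1 = t ∨ t + 1 = s

/-- The two normal product adjacencies on `α × ℕ`. -/
def prodAdj (i : ℕ) {α : Type} (κ : α → α → Prop) (p q : α × ℕ) : Prop :=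
  if i = 1 then (κ p.1 q.1 ∧ p.2 = q.2) ∨ (p.1 = q.1 ∧ natAdj p.2 q.2)
  else κ p.1 q.1 ∧ natAdj p.2 q.2

/-- `f` and `g` are `i`-homotopic: there is a continuous
`H : X ×_i [0,m]_ℤ → Y` with `H(·,0) = f` and `H(·,m) = g`. -/
def Homotopic (i : ℕ) {α β : Type} (κ : α → α → Prop) (δ : β → β → Prop)
    (f g : α → β) : Prop :=
  ∃ (m : ℕ) (H : α → ℕ → β),
    (∀ x, H x 0 = f x) ∧ (∀ x, H x m = g x) ∧
    (∀ x y s t, s ≤ m → t ≤ m → prodAdj i κ (x, s) (y, t) → δ (H x s) (H y t))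

/-- `i`-homotopy equivalence of digital images. -/
def HtpyEquiv (i : ℕ) {α β : Type} (κ : α → α → Prop) (δ : β → β → Prop) : Prop :=
  ∃ (f : α → β) (g : β → α),
    DigCont κ δ f ∧ DigCont δ κ g ∧
    Homotopic i κ κ (g ∘ f) id ∧ Homotopic i δ δ (f ∘ g) id

/-- Homotopy equivalence of digital pictures `(X, c_i, c_j)` and `(Y, c_i, c_j)`. -/
def PicHtpyEquiv (i j : ℕ) (X Y : Set Pt) : Prop :=
  HtpyEquiv i (subAdj i X) (subAdj i Y) ∧ HtpyEquiv j (subAdj j Xᶜ) (subAdj j Yᶜ)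

/-- Isomorphism of digital images: a continuous bijection with continuous inverse. -/
def DigIso {α β : Type} (κ : α → α → Prop) (δ : β → β → Prop) : Prop :=
  ∃ e : α ≃ β, DigCont κ δ ⇑e ∧ DigCont δ κ ⇑e.symm

/-- Isomorphism of digital pictures. -/
def PicIso (i j : ℕ) (X Y : Set Pt) : Prop :=
  DigIso (subAdj i X) (subAdj i Y) ∧ DigIso (subAdj j Xᶜ) (subAdj j Yᶜ)

/-- `x` and `y` are joined by a `c_i`-path inside `A`. -/
def ChainIn (i : ℕ) (A : Set Pt) (x y : Pt) : Prop :=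
  ∃ (n : ℕ) (c : ℕ → Pt), c 0 = x ∧ c n = y ∧ (∀ k ≤ n, c k ∈ A) ∧
    ∀ k < n, cAdj i (c k) (c (k + 1))

/-- `A` is `c_i`-connected. -/
def Conn (i : ℕ) (A : Set Pt) : Prop := ∀ x ∈ A, ∀ y ∈ A, ChainIn i A x y

/-- The `c_i`-component of `p` in `A`. -/
def compOf (i : ℕ) (A : Set Pt) (p : Pt) : Set Pt := {y | ChainIn i A p y}

/-- The digital picture `(X, c_i, c_j)` has no hole: every `c_j`-component
of the complement of `X` is infinite. -/
def NoHole (j : ℕ) (X : Set Pt) : Prop := ∀ p ∈ Xᶜ, (compOf j Xᶜ p).Infinite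

/-- The row of `X` at height `k`. -/
def rowOf (X : Set Pt) (k : ℤ) : Set Pt := X ∩ {p | p.2 = k}

/-- `r` is a row component of `(X, c_i)`: a `c_i`-component of a row of `X`. -/
def IsRowComp (i : ℕ) (X : Set Pt) (r : Set Pt) : Prop :=
  ∃ (k : ℤ) (p : Pt), p ∈ rowOf X k ∧ r = compOf i (rowOf X k) p

/-- Two subsets of `ℤ²` are `c_i`-adjacent. -/
def setAdj (i : ℕ) (A B : Set Pt) : Prop := ∃ a ∈ A, ∃ b ∈ B, cAdj i a b

/-- The edge relation of the row component graph `R(X, c_i)`: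
two distinct row components joined when they are `c_i`-adjacent. -/
def rcgAdj (i : ℕ) (X : Set Pt) (r s : Set Pt) : Prop :=
  IsRowComp i X r ∧ IsRowComp i X s ∧ r ≠ s ∧ setAdj i r s

/-- The row component graph `R(X, c_i)` is acyclic: there is no cycle of
`k ≥ 3` distinct row components with consecutive ones adjacent. -/
def RCGAcyclic (i : ℕ) (X : Set Pt) : Prop :=
  ¬ ∃ (k : ℕ) (r : ℕ → Set Pt), 3 ≤ k ∧
    (∀ t < k, IsRowComp i X (r t)) ∧
    (∀ t < k, ∀ t' < k, r t = r t' → t = t') ∧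
    (∀ t, t + 1 < k → rcgAdj i X (r t) (r (t + 1))) ∧
    rcgAdj i X (r (k - 1)) (r 0)

/-- The row component graph `R(X, c_i)` is connected. -/
def RCGConnected (i : ℕ) (X : Set Pt) : Prop :=
  ∀ r s : Set Pt, IsRowComp i X r → IsRowComp i X s →
    Relation.ReflTransGen (rcgAdj i X) r s

/-- A digital image is `i`-contractible: the identity is `i`-homotopic to a constant map. -/
def Contractible (i : ℕ) {α : Type} (κ : α → α → Prop) : Prop :=
  ∃ x₀ : α, Homotopic i κ κ id (fun _ => x₀)

/-- Row-convexity. -/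
def RowConvex (X : Set Pt) : Prop :=
  ∀ a b c k : ℤ, (a, k) ∈ X → (c, k) ∈ X → a ≤ b → b ≤ c → (b, k) ∈ X

/-- Column-convexity. -/
def ColConvex (X : Set Pt) : Prop :=
  ∀ a b c k : ℤ, (k, a) ∈ X → (k, c) ∈ X → a ≤ b → b ≤ c → (k, b) ∈ X

/-- The row-convex hull of `X`. -/
def Hr (X : Set Pt) : Set Pt := ⋂₀ {S | RowConvex S ∧ X ⊆ S}

/-- The column-convex hull of `X`. -/
def Hc (X : Set Pt) : Set Pt := ⋂₀ {S | ColConvex S ∧ X ⊆ S}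

/-- The rc-convex hull of `X`. -/
def Hrc (X : Set Pt) : Set Pt := ⋂₀ {S | (RowConvex S ∧ ColConvex S) ∧ X ⊆ S}

/-- A loop of length `m` inside `Z`: a continuous `γ : [0,m]_ℤ → Z` with `γ 0 = γ m`. -/
def LoopIn (j : ℕ) (Z : Set Pt) (m : ℕ) (γ : ℕ → Pt) : Prop :=
  γ 0 = γ m ∧ (∀ t ≤ m, γ t ∈ Z) ∧ ∀ t < m, cAdj j (γ t) (γ (t + 1))

/-- The loop `γ` is `j`-contractible in `Z`: there is a `j`-homotopy in `Z` from `γ`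
to the constant loop at `γ 0` whose every stage is a loop based at `γ 0`. -/
def LoopContractibleIn (j : ℕ) (Z : Set Pt) (m : ℕ) (γ : ℕ → Pt) : Prop :=
  ∃ (K : ℕ) (H : ℕ → ℕ → Pt),
    (∀ t, H t 0 = γ t) ∧ (∀ t, H t K = γ 0) ∧
    (∀ k ≤ K, H 0 k = γ 0 ∧ H m k = γ 0) ∧
    (∀ t ≤ m, ∀ k ≤ K, H t k ∈ Z) ∧
    (∀ s t k l, s ≤ m → t ≤ m → k ≤ K → l ≤ K →
      prodAdj j natAdj (s, k) (t, l) → cAdj j (H s k) (H t l))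

/-- The union of the infinite `c_j`-components of the complement of `X`. -/
def InfPart (j : ℕ) (X : Set Pt) : Set Pt := {p | p ∈ Xᶜ ∧ (compOf j Xᶜ p).Infinite}

/-- The outer perimeter of the digital picture `(X, c_i, c_j)`: the least length of a
non-`j`-contractible loop in the infinite component of the complement of `X`, or `1`
if no such loop exists.  (It depends only on `j` and `X`.) -/
noncomputable def outerPerim (j : ℕ) (X : Set Pt) : ℕ := by
  classical
  exact if (∃ m γ, LoopIn j (InfPart j X) m γ ∧ ¬ LoopContractibleIn j (InfPart j X) m γ)
    then sInf {m | ∃ γ, LoopIn j (InfPart j X) m γ ∧ ¬ LoopContractibleIn j (InfPart j X) m γ}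
    else 1

/-- The digital rectangle `I_{n,m} = [1,n]_ℤ × [1,m]_ℤ`. -/
def Irect (n m : ℤ) : Set Pt := Set.Icc 1 n ×ˢ Set.Icc 1 m

/-- A finite digital image is `i`-reducible when it is `i`-homotopy equivalent to a
digital image with strictly fewer points. -/
def Reducible (i : ℕ) {α : Type} (κ : α → α → Prop) : Prop :=
  ∃ (β : Type) (δ : β → β → Prop), Reflexive δ ∧ Symmetric δ ∧ Finite β ∧
    Nat.card β < Nat.card α ∧ HtpyEquiv i κ δ

/- ========================= auxiliary development ========================= -/

open Finset

noncomputable def ind (P : Prop) : ZMod 2 := by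
  classical exact if P then 1 else 0

lemma ind_pos {P : Prop} (h : P) : ind P = 1 := by simp [ind, h]
lemma ind_neg {P : Prop} (h : ¬ P) : ind P = 0 := by simp [ind, h]
lemma ind_congr {P Q : Prop} (h : P ↔ Q) : ind P = ind Q := by
  by_cases hP : P
  · rw [ind_pos hP, ind_pos (h.mp hP)]
  · rw [ind_neg hP, ind_neg (fun hQ => hP (h.mpr hQ))]

lemma zmod2_add_self : ∀ a : ZMod 2, a + a = 0 := by decide

lemma ind_xor4 {A B C D : Prop} (h1 : ¬ (A ∧ B)) (h2 : (A ∨ B) ↔ ¬ (C ↔ D)) :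
    ind A + ind B = ind C + ind D := by
  classical
  by_cases hA : A <;> by_cases hB : B <;> by_cases hC : C <;> by_cases hD : D <;>
    simp [ind_pos, ind_neg, hA, hB, hC, hD] at h1 h2 ⊢ <;> tauto

/-- coordinates consequences of adjacency -/
lemma cAdj_coords {i : ℕ} {u v : Pt} (hi : i = 1 ∨ i = 2) (h : cAdj i u v) :
    -1 ≤ u.1 - v.1 ∧ u.1 - v.1 ≤ 1 ∧ -1 ≤ u.2 - v.2 ∧ u.2 - v.2 ≤ 1 ∧
      (i = 1 → (u.1 = v.1 ∨ u.2 = v.2)) := by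
  rcases hi with hi | hi <;> subst hi <;> unfold cAdj at h
  · rw [if_pos rfl] at h
    have a1 := abs_nonneg (u.1 - v.1)
    have a2 := abs_nonneg (u.2 - v.2)
    have h1 : |u.1 - v.1| ≤ 1 := by linarith
    have h2 : |u.2 - v.2| ≤ 1 := by linarith
    obtain ⟨b1, b2⟩ := abs_le.mp h1
    obtain ⟨b3, b4⟩ := abs_le.mp h2
    refine ⟨b1, b2, b3, b4, fun _ => ?_⟩
    by_contra hcon
    push_neg at hcon
    obtain ⟨c1, c2⟩ := hcon
    have d1 : 1 ≤ |u.1 - v.1| := Int.one_le_abs (by omega)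
    have d2 : 1 ≤ |u.2 - v.2| := Int.one_le_abs (by omega)
    linarith
  · rw [if_neg (by omega)] at h
    obtain ⟨h1, h2⟩ := h
    obtain ⟨b1, b2⟩ := abs_le.mp h1
    obtain ⟨b3, b4⟩ := abs_le.mp h2
    exact ⟨b1, b2, b3, b4, fun hc => by omega⟩

lemma cAdj_of_coords {i : ℕ} {u v : Pt} (hi : i = 1 ∨ i = 2)
    (h1 : -1 ≤ u.1 - v.1) (h2 : u.1 - v.1 ≤ 1) (h3 : -1 ≤ u.2 - v.2) (h4 : u.2 - v.2 ≤ 1)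
    (h5 : i = 1 → (u.1 = v.1 ∨ u.2 = v.2)) : cAdj i u v := by
  rcases hi with hi | hi <;> subst hi <;> unfold cAdj
  · rw [if_pos rfl]
    rcases h5 rfl with h | h
    · rw [h]; simpa using abs_le.mpr ⟨h3, h4⟩
    · rw [h]; simpa using abs_le.mpr ⟨h1, h2⟩
  · rw [if_neg (by omega)]
    exact ⟨abs_le.mpr ⟨h1, h2⟩, abs_le.mpr ⟨h3, h4⟩⟩

lemma cAdj_symm {i : ℕ} {u v : Pt} (h : cAdj i u v) : cAdj i v u := by
  unfold cAdj at h ⊢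
  rw [abs_sub_comm v.1 u.1, abs_sub_comm v.2 u.2]
  exact h

/- ------------------ chains and components ------------------ -/

lemma chainIn_refl {i : ℕ} {A : Set Pt} {x : Pt} (h : x ∈ A) : ChainIn i A x x :=
  ⟨0, fun _ => x, rfl, rfl, fun _ _ => h, fun k hk => by omega⟩

lemma chainIn_trans {i : ℕ} {A : Set Pt} {x y z : Pt}
    (h1 : ChainIn i A x y) (h2 : ChainIn i A y z) : ChainIn i A x z := by
  obtain ⟨n, c, hc0, hcn, hmem, hadj⟩ := h1
  obtain ⟨m, d, hd0, hdm, hmem', hadj'⟩ := h2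
  refine ⟨n + m, fun t => if t ≤ n then c t else d (t - n), by simp [hc0], ?_, ?_, ?_⟩
  · beta_reduce
    by_cases hm : m = 0
    · subst hm; simp only [Nat.add_zero, if_pos le_rfl, hcn]
      rw [← hd0, ← hdm]
    · rw [if_neg (by omega), show n + m - n = m by omega, hdm]
  · intro t ht
    beta_reduce
    by_cases h : t ≤ n
    · rw [if_pos h]; exact hmem t h
    · rw [if_neg h]; exact hmem' (t - n) (by omega)
  · intro t ht
    beta_reduce
    by_cases h : t + 1 ≤ n
    · rw [if_pos (by omega), if_pos h]; exact hadj t (by omega)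
    · by_cases h' : t ≤ n
      · have heq : t = n := by omega
        subst heq
        rw [if_pos le_rfl, if_neg h, show t + 1 - t = 1 by omega]
        have := hadj' 0 (by omega)
        rwa [hd0, ← hcn] at this
      · rw [if_neg h', if_neg h, show t + 1 - n = (t - n) + 1 by omega]
        exact hadj' (t - n) (by omega)

lemma chainIn_symm {i : ℕ} {A : Set Pt} {x y : Pt}
    (h : ChainIn i A x y) : ChainIn i A y x := by
  obtain ⟨n, c, hc0, hcn, hmem, hadj⟩ := h
  refine ⟨n, fun t => c (n - t), by simp [hcn], by simp [hc0], fun t ht => hmem _ (by omega), ?_⟩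
  intro t ht
  beta_reduce
  have h1 : n - t = (n - (t+1)) + 1 := by omega
  rw [h1]
  exact cAdj_symm (hadj _ (by omega))

lemma chainIn_step {i : ℕ} {A : Set Pt} {x y z : Pt}
    (h : ChainIn i A x y) (hz : z ∈ A) (hadj : cAdj i y z) : ChainIn i A x z := by
  refine chainIn_trans h ⟨1, fun t => if t = 0 then y else z, by simp, by simp, ?_, ?_⟩
  · intro t ht
    by_cases h0 : t = 0
    · subst h0; simp only [if_pos rfl]
      obtain ⟨n, c, hc0, hcn, hmem, _⟩ := h
      rw [← hcn]; exact hmem n le_rfl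
    · simp [h0, hz]
  · intro t ht
    have : t = 0 := by omega
    subst this; simpa using hadj

lemma compOf_subset {i : ℕ} {A : Set Pt} {p : Pt} : compOf i A p ⊆ A := by
  rintro w ⟨n, c, hc0, hcn, hmem, _⟩
  rw [← hcn]; exact hmem n le_rfl

lemma mem_compOf_self {i : ℕ} {A : Set Pt} {p : Pt} (h : p ∈ A) : p ∈ compOf i A p :=
  chainIn_refl h

lemma compOf_eq_of_mem {i : ℕ} {A : Set Pt} {p q : Pt} (h : q ∈ compOf i A p) :
    compOf i A p = compOf i A q := by
  ext w
  exact ⟨fun hw => chainIn_trans (chainIn_symm h) hw, fun hw => chainIn_trans h hw⟩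

lemma compOf_adj_closed {i : ℕ} {A : Set Pt} {p a q : Pt}
    (ha : a ∈ compOf i A p) (hq : q ∈ A) (hadj : cAdj i a q) : q ∈ compOf i A p :=
  chainIn_step ha hq hadj

lemma setAdj_symm {i : ℕ} {A B : Set Pt} (h : setAdj i A B) : setAdj i B A := by
  obtain ⟨x, hx, y, hy, hxy⟩ := h
  exact ⟨y, hy, x, hx, cAdj_symm hxy⟩

lemma rcgAdj_symm {i : ℕ} {X : Set Pt} {r s : Set Pt} (h : rcgAdj i X r s) : rcgAdj i X s r :=
  ⟨h.2.1, h.1, h.2.2.1.symm, setAdj_symm h.2.2.2⟩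
/- ------------------ row components ------------------ -/

lemma mem_rowOf {X : Set Pt} {h : ℤ} {w : Pt} : w ∈ rowOf X h ↔ w ∈ X ∧ w.2 = h :=
  Iff.rfl

lemma int_ivt (f : ℕ → ℤ) (n : ℕ) (hstep : ∀ t < n, -1 ≤ f (t+1) - f t ∧ f (t+1) - f t ≤ 1)
    (x : ℤ) (hx1 : f 0 ≤ x) (hx2 : x ≤ f n) : ∃ t ≤ n, f t = x := by
  induction n with
  | zero => exact ⟨0, le_rfl, by omega⟩
  | succ m ih =>
    by_cases hc : x ≤ f m
    · obtain ⟨t, ht, hft⟩ := ih (fun t ht => hstep t (by omega)) hc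
      exact ⟨t, by omega, hft⟩
    · have := hstep m (by omega)
      exact ⟨m + 1, le_rfl, by omega⟩

/-- points on a chain starting in a component stay in the component -/
lemma chain_points_mem {i : ℕ} {A : Set Pt} {p a : Pt} (ha : a ∈ compOf i A p)
    {n : ℕ} {c : ℕ → Pt} (hc0 : c 0 = a) (hmem : ∀ k ≤ n, c k ∈ A)
    (hadj : ∀ k < n, cAdj i (c k) (c (k + 1))) :
    ∀ t ≤ n, c t ∈ compOf i A p := by
  intro t ht
  have : ChainIn i A a (c t) :=
    ⟨t, c, hc0, rfl, fun s hs => hmem s (by omega), fun s hs => hadj s (by omega)⟩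
  exact chainIn_trans ha this

/-- interval property of row components -/
lemma rowComp_interval {i : ℕ} (hi : i = 1 ∨ i = 2) {X : Set Pt} {hrow : ℤ} {p a b : Pt}
    (ha : a ∈ compOf i (rowOf X hrow) p) (hb : b ∈ compOf i (rowOf X hrow) p)
    {x : ℤ} (hx1 : a.1 ≤ x) (hx2 : x ≤ b.1) :
    ((x, hrow) : Pt) ∈ compOf i (rowOf X hrow) p := by
  have hchain : ChainIn i (rowOf X hrow) a b := chainIn_trans (chainIn_symm ha) hb
  obtain ⟨n, c, hc0, hcn, hmem, hadj⟩ := hchain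
  obtain ⟨t, ht, hft⟩ := int_ivt (fun t => (c t).1) n
    (fun t ht => by
      beta_reduce
      have := cAdj_coords hi (hadj t ht)
      omega)
    x (by beta_reduce; rw [hc0]; exact hx1) (by beta_reduce; rw [hcn]; exact hx2)
  have hct : c t ∈ compOf i (rowOf X hrow) p := chain_points_mem ha hc0 hmem hadj t ht
  have hrr : (c t).2 = hrow := (hmem t ht).2
  have : c t = ((x, hrow) : Pt) := Prod.ext hft hrr
  rwa [this] at hct

/-- separation of distinct components of the same row -/
lemma rowComp_sep {i : ℕ} (hi : i = 1 ∨ i = 2) {X : Set Pt} {hrow : ℤ} {p q a b : Pt}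
    (hp : p ∈ rowOf X hrow) (hq : q ∈ rowOf X hrow)
    (hne : compOf i (rowOf X hrow) p ≠ compOf i (rowOf X hrow) q)
    (ha : a ∈ compOf i (rowOf X hrow) p) (hb : b ∈ compOf i (rowOf X hrow) q) :
    a.1 + 2 ≤ b.1 ∨ b.1 + 2 ≤ a.1 := by
  by_contra hcon
  push_neg at hcon
  have haA : a ∈ rowOf X hrow := compOf_subset ha
  have hbA : b ∈ rowOf X hrow := compOf_subset hb
  have hadj : cAdj i a b := by
    refine cAdj_of_coords hi (by omega) (by omega) ?_ ?_ ?_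
    · rw [haA.2, hbA.2]; omega
    · rw [haA.2, hbA.2]; omega
    · intro _; right; rw [haA.2, hbA.2]
  have hbp : b ∈ compOf i (rowOf X hrow) p := compOf_adj_closed ha hbA hadj
  have e1 : compOf i (rowOf X hrow) p = compOf i (rowOf X hrow) b := compOf_eq_of_mem hbp
  have e2 : compOf i (rowOf X hrow) q = compOf i (rowOf X hrow) b := compOf_eq_of_mem hb
  exact hne (e1.trans e2.symm)

/-- distinct adjacent row components live on adjacent rows -/
lemma rowComp_adj_heights {i : ℕ} (hi : i = 1 ∨ i = 2) {X : Set Pt} {hrow hrow' : ℤ} {p q : Pt}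
    (hp : p ∈ rowOf X hrow) (hq : q ∈ rowOf X hrow')
    (hne : compOf i (rowOf X hrow) p ≠ compOf i (rowOf X hrow') q)
    (hadj : setAdj i (compOf i (rowOf X hrow) p) (compOf i (rowOf X hrow') q)) :
    hrow' = hrow + 1 ∨ hrow' = hrow - 1 := by
  obtain ⟨a, ha, b, hb, hab⟩ := hadj
  have hah : a.2 = hrow := (compOf_subset ha).2
  have hbh : b.2 = hrow' := (compOf_subset hb).2
  have hco := cAdj_coords hi hab
  have hne' : hrow ≠ hrow' := by
    intro he
    subst he
    have := rowComp_sep hi hp hq hne ha hb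
    omega
  omega

/-- heights of row components are well defined -/
lemma rowComp_height_unique {i : ℕ} {X : Set Pt} {E : Set Pt} {hh hh' : ℤ} {pp pp' : Pt}
    (h1 : pp ∈ rowOf X hh) (h2 : E = compOf i (rowOf X hh) pp)
    (h3 : pp' ∈ rowOf X hh') (h4 : E = compOf i (rowOf X hh') pp') : hh = hh' := by
  have hmem : pp ∈ E := h2 ▸ mem_compOf_self h1
  have : pp ∈ rowOf X hh' := compOf_subset (h4 ▸ hmem)
  rw [← h1.2, this.2]

/-- two distinct components of the same row are totally ordered by column -/
lemma rowComp_total_order {i : ℕ} (hi : i = 1 ∨ i = 2) {X : Set Pt} {hrow : ℤ} {p q : Pt}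
    (hp : p ∈ rowOf X hrow) (hq : q ∈ rowOf X hrow)
    (hne : compOf i (rowOf X hrow) p ≠ compOf i (rowOf X hrow) q) :
    (∀ a ∈ compOf i (rowOf X hrow) p, ∀ b ∈ compOf i (rowOf X hrow) q, a.1 < b.1) ∨
    (∀ a ∈ compOf i (rowOf X hrow) p, ∀ b ∈ compOf i (rowOf X hrow) q, b.1 < a.1) := by
  by_contra hcon
  push_neg at hcon
  obtain ⟨⟨a1, ha1, b1, hb1, h1⟩, ⟨a2, ha2, b2, hb2, h2⟩⟩ := hcon
  have merge : ∀ w : Pt, w ∈ compOf i (rowOf X hrow) p → w ∈ compOf i (rowOf X hrow) q → False := by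
    intro w hwp hwq
    refine hne ?_
    rw [compOf_eq_of_mem hwp, compOf_eq_of_mem hwq]
  have hs1 := rowComp_sep hi hp hq hne ha1 hb1
  have hs2 := rowComp_sep hi hp hq hne ha2 hb2
  -- b1.1 + 2 ≤ a1.1 and a2.1 + 2 ≤ b2.1
  have hb1a1 : b1.1 + 2 ≤ a1.1 := by omega
  have ha2b2 : a2.1 + 2 ≤ b2.1 := by omega
  by_cases hcase : a1.1 ≤ b2.1
  · -- a1 lies between b1 and b2, so a1 ∈ comp q
    have hmem : ((a1.1, hrow) : Pt) ∈ compOf i (rowOf X hrow) q :=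
      rowComp_interval hi hb1 hb2 (by omega) hcase
    have ha1eq : a1 = ((a1.1, hrow) : Pt) := Prod.ext rfl (compOf_subset ha1).2
    exact merge a1 ha1 (ha1eq ▸ hmem)
  · -- b2 lies between a2 and a1, so b2 ∈ comp p
    have hmem : ((b2.1, hrow) : Pt) ∈ compOf i (rowOf X hrow) p :=
      rowComp_interval hi ha2 ha1 (by omega) (by omega)
    have hb2eq : b2 = ((b2.1, hrow) : Pt) := Prod.ext rfl (compOf_subset hb2).2
    exact merge b2 (hb2eq ▸ hmem) hb2
/- ------------------ crossing parity machinery ------------------ -/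

def xpairP (g : ℤ) (u v : Pt) : Prop :=
  (u.1 = g ∧ v.1 = g + 1) ∨ (u.1 = g + 1 ∧ v.1 = g)

def crossP (g hh : ℤ) (u v : Pt) : Prop := xpairP g u v ∧ 2 * hh ≤ u.2 + v.2

def botP (g hh : ℤ) (u v : Pt) : Prop :=
  ((u.2 = hh - 1 ∧ v.2 = hh) ∨ (u.2 = hh ∧ v.2 = hh - 1)) ∧ u.1 ≤ g ∧ v.1 ≤ g

def QP (g hh : ℤ) (w : Pt) : Prop := w.1 ≤ g ∧ hh ≤ w.2

lemma zmod2_eq_of_add_eq_zero {x y : ZMod 2} (h : x + y = 0) : x = y := by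
  linear_combination h - zmod2_add_self y

lemma zmod2_telescope (g : ℕ → ZMod 2) (n : ℕ) :
    ∑ t ∈ Finset.range n, (g t + g (t + 1)) = g 0 + g n := by
  induction n with
  | zero => rw [Finset.sum_range_zero]; exact (zmod2_add_self (g 0)).symm
  | succ m ih =>
    rw [Finset.sum_range_succ, ih]
    linear_combination zmod2_add_self (g m)

lemma excl_coords {X : Set Pt} {u v : Pt} {x1 y1 x2 y2 : ℤ} (hu : u ∈ X) (hv : v ∈ X)
    (H : ((x1, y1) : Pt) ∉ X ∨ ((x2, y2) : Pt) ∉ X) :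
    ¬(u.1 = x1 ∧ u.2 = y1 ∧ v.1 = x2 ∧ v.2 = y2) ∧
      ¬(u.1 = x2 ∧ u.2 = y2 ∧ v.1 = x1 ∧ v.2 = y1) := by
  constructor
  · rintro ⟨e1, e2, e3, e4⟩
    have h1 : u = ((x1, y1) : Pt) := Prod.ext e1 e2
    have h2 : v = ((x2, y2) : Pt) := Prod.ext e3 e4
    rcases H with H | H
    · exact H (h1 ▸ hu)
    · exact H (h2 ▸ hv)
  · rintro ⟨e1, e2, e3, e4⟩
    have h1 : u = ((x2, y2) : Pt) := Prod.ext e1 e2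
    have h2 : v = ((x1, y1) : Pt) := Prod.ext e3 e4
    rcases H with H | H
    · exact H (h2 ▸ hv)
    · exact H (h1 ▸ hu)

/-- termwise form of vertical ray-move invariance -/
lemma content_vert {i : ℕ} (hi : i = 1 ∨ i = 2) {u v : Pt} {g hh : ℤ}
    (c1 : -1 ≤ u.1 - v.1) (c2 : u.1 - v.1 ≤ 1) (c3 : -1 ≤ u.2 - v.2) (c4 : u.2 - v.2 ≤ 1)
    (c5 : i = 1 → u.1 = v.1 ∨ u.2 = v.2)
    (hA : ¬(u.1 = g ∧ u.2 = hh ∧ v.1 = g + 1 ∧ v.2 = hh) ∧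
          ¬(u.1 = g + 1 ∧ u.2 = hh ∧ v.1 = g ∧ v.2 = hh))
    (hB : i = 2 → ¬(u.1 = g ∧ u.2 = hh ∧ v.1 = g + 1 ∧ v.2 = hh + 1) ∧
          ¬(u.1 = g + 1 ∧ u.2 = hh + 1 ∧ v.1 = g ∧ v.2 = hh))
    (hC : i = 2 → ¬(u.1 = g ∧ u.2 = hh + 1 ∧ v.1 = g + 1 ∧ v.2 = hh) ∧
          ¬(u.1 = g + 1 ∧ u.2 = hh ∧ v.1 = g ∧ v.2 = hh + 1)) :
    ind (crossP g hh u v) = ind (crossP g (hh + 1) u v) := by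
  apply ind_congr
  unfold crossP xpairP
  obtain ⟨hA1, hA2⟩ := hA
  rcases hi with hi | hi
  · have := c5 hi; omega
  · obtain ⟨hB1, hB2⟩ := hB hi
    obtain ⟨hC1, hC2⟩ := hC hi
    omega

/-- termwise quadrant identity -/
lemma content_T1 {i : ℕ} (hi : i = 1 ∨ i = 2) {u v : Pt} {g hh : ℤ}
    (c1 : -1 ≤ u.1 - v.1) (c2 : u.1 - v.1 ≤ 1) (c3 : -1 ≤ u.2 - v.2) (c4 : u.2 - v.2 ≤ 1)
    (c5 : i = 1 → u.1 = v.1 ∨ u.2 = v.2)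
    (hE : i = 2 → ¬(u.1 = g ∧ u.2 = hh ∧ v.1 = g + 1 ∧ v.2 = hh - 1) ∧
          ¬(u.1 = g + 1 ∧ u.2 = hh - 1 ∧ v.1 = g ∧ v.2 = hh)) :
    ind (crossP g hh u v) + ind (botP g hh u v) = ind (QP g hh u) + ind (QP g hh v) := by
  apply ind_xor4
  · unfold crossP xpairP botP; omega
  · unfold crossP xpairP botP QP
    rcases hi with hi | hi
    · have := c5 hi; omega
    · obtain ⟨hE1, hE2⟩ := hE hi; omega

/-- termwise bot-shift identity -/
lemma content_T2 {i : ℕ} (hi : i = 1 ∨ i = 2) {u v : Pt} {g hh : ℤ}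
    (c1 : -1 ≤ u.1 - v.1) (c2 : u.1 - v.1 ≤ 1) (c3 : -1 ≤ u.2 - v.2) (c4 : u.2 - v.2 ≤ 1)
    (c5 : i = 1 → u.1 = v.1 ∨ u.2 = v.2)
    (hE3 : ¬(u.1 = g + 1 ∧ u.2 = hh ∧ v.1 = g + 1 ∧ v.2 = hh - 1) ∧
           ¬(u.1 = g + 1 ∧ u.2 = hh - 1 ∧ v.1 = g + 1 ∧ v.2 = hh))
    (hE4 : i = 2 → ¬(u.1 = g + 1 ∧ u.2 = hh ∧ v.1 = g ∧ v.2 = hh - 1) ∧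
           ¬(u.1 = g ∧ u.2 = hh - 1 ∧ v.1 = g + 1 ∧ v.2 = hh))
    (hE5 : i = 2 → ¬(u.1 = g ∧ u.2 = hh ∧ v.1 = g + 1 ∧ v.2 = hh - 1) ∧
           ¬(u.1 = g + 1 ∧ u.2 = hh - 1 ∧ v.1 = g ∧ v.2 = hh)) :
    ind (botP g hh u v) = ind (botP (g + 1) hh u v) := by
  apply ind_congr
  unfold botP
  obtain ⟨h31, h32⟩ := hE3
  rcases hi with hi | hi
  · have := c5 hi; omega
  · obtain ⟨h41, h42⟩ := hE4 hi
    obtain ⟨h51, h52⟩ := hE5 hi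
    omega

lemma ind_flip3 {A B C : Prop} (h : A ↔ ¬(B ↔ C)) : ind A + (ind B + ind C) = 0 := by
  classical
  by_cases hB : B <;> by_cases hC : C
  · rw [ind_neg (fun hA => (h.mp hA) (iff_of_true hB hC)), ind_pos hB, ind_pos hC]; decide
  · rw [ind_pos (h.mpr (by tauto)), ind_pos hB, ind_neg hC]; decide
  · rw [ind_pos (h.mpr (by tauto)), ind_neg hB, ind_pos hC]; decide
  · rw [ind_neg (fun hA => (h.mp hA) (iff_of_false hB hC)), ind_neg hB, ind_neg hC]; decide
/- ------------------ the loop built from a cycle ------------------ -/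

structure CycData where
  k : ℕ
  a : ℕ → Pt
  b : ℕ → Pt
  h : ℕ → ℤ

namespace CycData

variable (D : CycData)

def predk (n : ℕ) : ℕ := if n = 0 then D.k - 1 else n - 1

def cN (n : ℕ) : ℤ := (D.b (D.predk n)).1
def dN (n : ℕ) : ℤ := (D.a n).1
def lenN (n : ℕ) : ℕ := (D.dN n - D.cN n).natAbs
def colAt (n t : ℕ) : ℤ := D.cN n + (D.dN n - D.cN n).sign * t
def ptN (n t : ℕ) : Pt := (D.colAt n t, D.h n)

noncomputable def sumSteps (f : Pt → Pt → ZMod 2) : ZMod 2 :=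
  ∑ n ∈ Finset.range D.k,
    ((∑ t ∈ Finset.range (D.lenN n), f (D.ptN n t) (D.ptN n (t + 1))) + f (D.a n) (D.b n))

def IsStep (u v : Pt) : Prop :=
  (∃ n < D.k, ∃ t < D.lenN n, u = D.ptN n t ∧ v = D.ptN n (t + 1)) ∨
    (∃ n < D.k, u = D.a n ∧ v = D.b n)

noncomputable def W (g hh : ℤ) : ZMod 2 := D.sumSteps (fun u v => ind (crossP g hh u v))

lemma predk_lt (hk : 0 < D.k) (n : ℕ) (hn : n < D.k) : D.predk n < D.k := by
  unfold predk; split <;> omega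

lemma sumSteps_congr {f f' : Pt → Pt → ZMod 2}
    (H : ∀ u v, D.IsStep u v → f u v = f' u v) : D.sumSteps f = D.sumSteps f' := by
  unfold sumSteps
  refine Finset.sum_congr rfl fun n hn => ?_
  have hn' := Finset.mem_range.mp hn
  congr 1
  · refine Finset.sum_congr rfl fun t ht => ?_
    exact H _ _ (Or.inl ⟨n, hn', t, Finset.mem_range.mp ht, rfl, rfl⟩)
  · exact H _ _ (Or.inr ⟨n, hn', rfl, rfl⟩)

lemma sumSteps_add (f f' : Pt → Pt → ZMod 2) :
    D.sumSteps (fun u v => f u v + f' u v) = D.sumSteps f + D.sumSteps f' := by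
  unfold sumSteps
  rw [← Finset.sum_add_distrib]
  refine Finset.sum_congr rfl fun n _ => ?_
  rw [Finset.sum_add_distrib]
  ring

lemma sumSteps_zero : D.sumSteps (fun _ _ => 0) = 0 := by
  simp [sumSteps]

lemma ptN_zero (n : ℕ) (hb2 : (D.b (D.predk n)).2 = D.h n) : D.ptN n 0 = D.b (D.predk n) := by
  have : D.b (D.predk n) = ((D.b (D.predk n)).1, D.h n) := Prod.ext rfl hb2
  rw [this]
  unfold ptN colAt
  rw [Nat.cast_zero, mul_zero, add_zero]
  rfl

lemma ptN_last (n : ℕ) (ha2 : (D.a n).2 = D.h n) : D.ptN n (D.lenN n) = D.a n := by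
  have : D.a n = ((D.a n).1, D.h n) := Prod.ext rfl ha2
  rw [this]
  unfold ptN colAt lenN
  rw [Int.sign_mul_natAbs]
  unfold cN dN
  congr 1
  ring

/-- the key reason everything telescopes: the loop is closed -/
lemma sumSteps_flip (P : Pt → Prop) (hk : 0 < D.k)
    (hb2 : ∀ n < D.k, (D.b (D.predk n)).2 = D.h n) (ha2 : ∀ n < D.k, (D.a n).2 = D.h n) :
    D.sumSteps (fun u v => ind (P u) + ind (P v)) = 0 := by
  unfold sumSteps
  have key : ∀ n ∈ Finset.range D.k,
      ((∑ t ∈ Finset.range (D.lenN n), (ind (P (D.ptN n t)) + ind (P (D.ptN n (t + 1))))) +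
        (ind (P (D.a n)) + ind (P (D.b n))))
      = ind (P (D.b (D.predk n))) + ind (P (D.b n)) := by
    intro n hn
    have hn' := Finset.mem_range.mp hn
    rw [zmod2_telescope (fun t => ind (P (D.ptN n t))) (D.lenN n)]
    rw [ptN_zero D n (hb2 n hn'), ptN_last D n (ha2 n hn')]
    linear_combination zmod2_add_self (ind (P (D.a n)))
  rw [Finset.sum_congr rfl key, Finset.sum_add_distrib]
  have hbij : ∑ n ∈ Finset.range D.k, ind (P (D.b (D.predk n)))
      = ∑ n ∈ Finset.range D.k, ind (P (D.b n)) := by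
    refine Finset.sum_nbij' (fun n => D.predk n) (fun n => if n + 1 = D.k then 0 else n + 1)
      ?_ ?_ ?_ ?_ ?_
    · intro n hn
      exact Finset.mem_range.mpr (D.predk_lt hk n (Finset.mem_range.mp hn))
    · intro n hn
      have := Finset.mem_range.mp hn
      beta_reduce
      split <;> [exact Finset.mem_range.mpr hk; exact Finset.mem_range.mpr (by omega)]
    · intro n hn
      have := Finset.mem_range.mp hn
      beta_reduce
      unfold predk
      split <;> split <;> omega
    · intro n hn
      have := Finset.mem_range.mp hn
      beta_reduce
      unfold predk
      split <;> split <;> omega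
    · intro n hn; rfl
  rw [hbij]
  exact zmod2_add_self _
end CycData

namespace CycData
variable (D : CycData)

lemma sum_pred (f : ℕ → ZMod 2) (hk : 0 < D.k) :
    ∑ n ∈ Finset.range D.k, f (D.predk n) = ∑ n ∈ Finset.range D.k, f n := by
  refine Finset.sum_nbij' (fun n => D.predk n) (fun n => if n + 1 = D.k then 0 else n + 1)
    ?_ ?_ ?_ ?_ ?_
  · intro n hn
    exact Finset.mem_range.mpr (D.predk_lt hk n (Finset.mem_range.mp hn))
  · intro n hn
    have := Finset.mem_range.mp hn
    beta_reduce
    split <;> [exact Finset.mem_range.mpr hk; exact Finset.mem_range.mpr (by omega)]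
  · intro n hn
    have := Finset.mem_range.mp hn
    beta_reduce
    unfold predk
    split <;> split <;> omega
  · intro n hn
    have := Finset.mem_range.mp hn
    beta_reduce
    unfold predk
    split <;> split <;> omega
  · intro n hn; rfl

end CycData
/- ------------------ sum-level invariance lemmas ------------------ -/

namespace CycData
variable (D : CycData)

section WithX
variable {i : ℕ} {X : Set Pt}

/-- vertical ray-move -/
lemma W_vert (hi : i = 1 ∨ i = 2)
    (hstepX : ∀ u v, D.IsStep u v → u ∈ X ∧ v ∈ X ∧ cAdj i u v) (g hh : ℤ)
    (H1 : ((g, hh) : Pt) ∉ X ∨ ((g + 1, hh) : Pt) ∉ X)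
    (H2 : i = 2 → (((g, hh) : Pt) ∉ X ∨ ((g + 1, hh + 1) : Pt) ∉ X))
    (H3 : i = 2 → (((g, hh + 1) : Pt) ∉ X ∨ ((g + 1, hh) : Pt) ∉ X)) :
    D.W g hh = D.W g (hh + 1) := by
  refine D.sumSteps_congr fun u v hst => ?_
  obtain ⟨hu, hv, hadj⟩ := hstepX u v hst
  obtain ⟨c1, c2, c3, c4, c5⟩ := cAdj_coords hi hadj
  exact content_vert hi c1 c2 c3 c4 c5 (excl_coords hu hv H1)
    (fun h2 => excl_coords hu hv (H2 h2)) (fun h2 => excl_coords hu hv (H3 h2))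

/-- horizontal ray-move -/
lemma W_horiz (hi : i = 1 ∨ i = 2) (hk : 0 < D.k)
    (hstepX : ∀ u v, D.IsStep u v → u ∈ X ∧ v ∈ X ∧ cAdj i u v)
    (hb2 : ∀ n < D.k, (D.b (D.predk n)).2 = D.h n) (ha2 : ∀ n < D.k, (D.a n).2 = D.h n)
    (g hh : ℤ)
    (H1 : ((g + 1, hh) : Pt) ∉ X)
    (H2 : i = 2 → (((g, hh) : Pt) ∉ X ∨ ((g + 1, hh - 1) : Pt) ∉ X)) :
    D.W g hh = D.W (g + 1) hh := by
  have quad : ∀ g' : ℤ,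
      (i = 2 → (((g', hh) : Pt) ∉ X ∨ ((g' + 1, hh - 1) : Pt) ∉ X)) →
      D.W g' hh = D.sumSteps (fun u v => ind (botP g' hh u v)) := by
    intro g' hE
    have key : D.sumSteps (fun u v => ind (crossP g' hh u v) + ind (botP g' hh u v))
        = D.sumSteps (fun u v => ind (QP g' hh u) + ind (QP g' hh v)) := by
      refine D.sumSteps_congr fun u v hst => ?_
      obtain ⟨hu, hv, hadj⟩ := hstepX u v hst
      obtain ⟨c1, c2, c3, c4, c5⟩ := cAdj_coords hi hadj
      exact content_T1 hi c1 c2 c3 c4 c5 (fun h2 => excl_coords hu hv (hE h2))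
    rw [D.sumSteps_add, D.sumSteps_flip (QP g' hh) hk hb2 ha2] at key
    exact zmod2_eq_of_add_eq_zero key
  have e1 : D.W g hh = D.sumSteps (fun u v => ind (botP g hh u v)) := quad g H2
  have e2 : D.W (g + 1) hh = D.sumSteps (fun u v => ind (botP (g + 1) hh u v)) :=
    quad (g + 1) (fun _ => Or.inl H1)
  rw [e1, e2]
  refine D.sumSteps_congr fun u v hst => ?_
  obtain ⟨hu, hv, hadj⟩ := hstepX u v hst
  obtain ⟨c1, c2, c3, c4, c5⟩ := cAdj_coords hi hadj
  exact content_T2 hi c1 c2 c3 c4 c5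
    (excl_coords hu hv (Or.inl H1))
    (fun h2 => excl_coords hu hv (Or.inl H1))
    (fun h2 => excl_coords hu hv (H2 h2))

lemma notmem_coords {X : Set Pt} {w : Pt} (h : w ∉ X) {x y : ℤ} (hx : x = w.1) (hy : y = w.2) :
    ((x, y) : Pt) ∉ X := by
  subst hx; subst hy; rwa [Prod.mk.eta]

/-- one complement step, in the "increasing" direction -/
lemma W_halfstep {j : ℕ} (hij : (i = 1 ∧ j = 2) ∨ (i = 2 ∧ j = 1)) (hk : 0 < D.k)
    (hstepX : ∀ u v, D.IsStep u v → u ∈ X ∧ v ∈ X ∧ cAdj i u v)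
    (hb2 : ∀ n < D.k, (D.b (D.predk n)).2 = D.h n) (ha2 : ∀ n < D.k, (D.a n).2 = D.h n)
    {p q : Pt} (hp : p ∉ X) (hq : q ∉ X) (hadj : cAdj j p q)
    (hdy : p.2 ≤ q.2) (hdx : p.2 = q.2 → p.1 ≤ q.1) :
    D.W p.1 p.2 = D.W q.1 q.2 := by
  have hi : i = 1 ∨ i = 2 := by omega
  have hj : j = 1 ∨ j = 2 := by omega
  obtain ⟨c1, c2, c3, c4, c5⟩ := cAdj_coords hj hadj
  have hp' : ((p.1, p.2) : Pt) ∉ X := by rwa [Prod.mk.eta]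
  have hq' : ((q.1, q.2) : Pt) ∉ X := by rwa [Prod.mk.eta]
  have vert := D.W_vert hi hstepX
  have horiz := D.W_horiz hi hk hstepX hb2 ha2
  rcases (by omega :
      (q.1 = p.1 ∧ q.2 = p.2) ∨ (q.1 = p.1 + 1 ∧ q.2 = p.2) ∨
      (q.2 = p.2 + 1 ∧ (q.1 = p.1 ∨ (i = 1 ∧ q.1 = p.1 + 1) ∨ (i = 1 ∧ q.1 = p.1 - 1))))
    with ⟨hx, hy⟩ | ⟨hx, hy⟩ | ⟨hy, hrest⟩
  · rw [hx, hy]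
  · -- horizontal move right
    have s1 := horiz p.1 p.2 (notmem_coords hq (by omega) (by omega)) (fun _ => Or.inl hp')
    rw [s1, hx, hy]
  · rcases hrest with hx | ⟨hi1, hx⟩ | ⟨hi1, hx⟩
    · -- vertical move up
      have s1 := vert p.1 p.2 (Or.inl hp') (fun _ => Or.inl hp')
        (fun _ => Or.inl (notmem_coords hq (by omega) (by omega)))
      rw [s1, hx, hy]
    · -- diagonal up-right (only i = 1)
      have no2 : i ≠ 2 := by omega
      have s1 := vert p.1 p.2 (Or.inl hp') (fun h2 => absurd h2 no2) (fun h2 => absurd h2 no2)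
      have s2 := horiz p.1 (p.2 + 1) (notmem_coords hq (by omega) (by omega))
        (fun h2 => absurd h2 no2)
      rw [s1, s2, hx, hy]
    · -- diagonal up-left (only i = 1)
      have no2 : i ≠ 2 := by omega
      have e : p.1 - 1 + 1 = p.1 := by ring
      have s1 := horiz (p.1 - 1) p.2 (notmem_coords hp (by omega) (by omega))
        (fun h2 => absurd h2 no2)
      have s2 := vert (p.1 - 1) p.2 (Or.inr (notmem_coords hp (by omega) (by omega)))
        (fun h2 => absurd h2 no2) (fun h2 => absurd h2 no2)
      rw [e] at s1
      rw [← s1, s2, hx, hy]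

/-- invariance of the winding parity under one complement step -/
lemma W_step {j : ℕ} (hij : (i = 1 ∧ j = 2) ∨ (i = 2 ∧ j = 1)) (hk : 0 < D.k)
    (hstepX : ∀ u v, D.IsStep u v → u ∈ X ∧ v ∈ X ∧ cAdj i u v)
    (hb2 : ∀ n < D.k, (D.b (D.predk n)).2 = D.h n) (ha2 : ∀ n < D.k, (D.a n).2 = D.h n)
    {p q : Pt} (hp : p ∉ X) (hq : q ∉ X) (hadj : cAdj j p q) :
    D.W p.1 p.2 = D.W q.1 q.2 := by
  by_cases hc : p.2 < q.2 ∨ (p.2 = q.2 ∧ p.1 ≤ q.1)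
  · exact D.W_halfstep hij hk hstepX hb2 ha2 hp hq hadj (by omega) (by omega)
  · push_neg at hc
    have hj : j = 1 ∨ j = 2 := by omega
    obtain ⟨c1, c2, c3, c4, c5⟩ := cAdj_coords hj hadj
    exact (D.W_halfstep hij hk hstepX hb2 ha2 hq hp (cAdj_symm hadj) (by omega) (by omega)).symm

/-- invariance of the winding parity along complement chains -/
lemma W_chain {j : ℕ} (hij : (i = 1 ∧ j = 2) ∨ (i = 2 ∧ j = 1)) (hk : 0 < D.k)
    (hstepX : ∀ u v, D.IsStep u v → u ∈ X ∧ v ∈ X ∧ cAdj i u v)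
    (hb2 : ∀ n < D.k, (D.b (D.predk n)).2 = D.h n) (ha2 : ∀ n < D.k, (D.a n).2 = D.h n)
    {p q : Pt} (hchain : ChainIn j Xᶜ p q) :
    D.W p.1 p.2 = D.W q.1 q.2 := by
  obtain ⟨n, c, hc0, hcn, hmem, hadj⟩ := hchain
  have key : ∀ t ≤ n, D.W (c 0).1 (c 0).2 = D.W (c t).1 (c t).2 := by
    intro t ht
    induction t with
    | zero => rfl
    | succ m ih =>
      rw [ih (by omega)]
      exact D.W_step hij hk hstepX hb2 ha2 (hmem m (by omega)) (hmem (m+1) (by omega))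
        (hadj m (by omega))
  have := key n le_rfl
  rwa [hc0, hcn] at this

/-- the winding parity vanishes far away -/
lemma W_far (hi : i = 1 ∨ i = 2) (hk : 0 < D.k)
    (hstepX : ∀ u v, D.IsStep u v → u ∈ X ∧ v ∈ X ∧ cAdj i u v)
    (hb2 : ∀ n < D.k, (D.b (D.predk n)).2 = D.h n) (ha2 : ∀ n < D.k, (D.a n).2 = D.h n)
    {lx ux ly uy : ℤ} (hbox : ∀ w ∈ X, lx ≤ w.1 ∧ w.1 ≤ ux ∧ ly ≤ w.2 ∧ w.2 ≤ uy)
    {q : Pt} (hq : q.1 < lx ∨ ux < q.1 ∨ q.2 < ly ∨ uy < q.2) :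
    D.W q.1 q.2 = 0 := by
  rcases hq with hq | hq | hq | hq
  · rw [show (0 : ZMod 2) = D.sumSteps (fun _ _ => 0) from (D.sumSteps_zero).symm]
    refine D.sumSteps_congr fun u v hst => ?_
    obtain ⟨hu, hv, _⟩ := hstepX u v hst
    refine ind_neg ?_
    rintro ⟨hxp, -⟩
    have b1 := (hbox u hu).1
    have b2 := (hbox v hv).1
    unfold xpairP at hxp
    omega
  · rw [show (0 : ZMod 2) = D.sumSteps (fun _ _ => 0) from (D.sumSteps_zero).symm]
    refine D.sumSteps_congr fun u v hst => ?_
    obtain ⟨hu, hv, _⟩ := hstepX u v hst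
    refine ind_neg ?_
    rintro ⟨hxp, -⟩
    have b1 := (hbox u hu).2.1
    have b2 := (hbox v hv).2.1
    unfold xpairP at hxp
    omega
  · -- below everything: crossings are exactly the flips of the predicate (·.1 ≤ q.1)
    have e1 : D.W q.1 q.2 = D.sumSteps (fun u v =>
        ind ((fun w => w.1 ≤ q.1) u) + ind ((fun w => w.1 ≤ q.1) v)) := by
      refine D.sumSteps_congr fun u v hst => ?_
      obtain ⟨hu, hv, hadj⟩ := hstepX u v hst
      obtain ⟨c1, c2, c3, c4, c5⟩ := cAdj_coords hi hadj
      have b1 := (hbox u hu).2.2.1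
      have b2 := (hbox v hv).2.2.1
      have hiff : crossP q.1 q.2 u v ↔ ¬((u.1 ≤ q.1) ↔ (v.1 ≤ q.1)) := by
        unfold crossP xpairP; omega
      beta_reduce
      by_cases hA : u.1 ≤ q.1 <;> by_cases hB : v.1 ≤ q.1
      · rw [ind_neg (fun hc => (hiff.mp hc) (iff_of_true hA hB)), ind_pos hA, ind_pos hB]; decide
      · rw [ind_pos (hiff.mpr (by tauto)), ind_pos hA, ind_neg hB]; decide
      · rw [ind_pos (hiff.mpr (by tauto)), ind_neg hA, ind_pos hB]; decide
      · rw [ind_neg (fun hc => (hiff.mp hc) (iff_of_false hA hB)), ind_neg hA, ind_neg hB]; decide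
    rw [e1]
    exact D.sumSteps_flip _ hk hb2 ha2
  · rw [show (0 : ZMod 2) = D.sumSteps (fun _ _ => 0) from (D.sumSteps_zero).symm]
    refine D.sumSteps_congr fun u v hst => ?_
    obtain ⟨hu, hv, _⟩ := hstepX u v hst
    refine ind_neg ?_
    rintro ⟨-, hht⟩
    have b1 := (hbox u hu).2.2.2
    have b2 := (hbox v hv).2.2.2
    omega
end WithX
end CycData
/- ------------------ the main contradiction ------------------ -/

lemma main_contra (i j : ℕ) (hij : (i = 1 ∧ j = 2) ∨ (i = 2 ∧ j = 1))
    (X : Set Pt) (hX : X.Finite) (hnohole : NoHole j X)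
    (k : ℕ) (hk : 3 ≤ k)
    (e : ℕ → Set Pt) (h : ℕ → ℤ) (p a b : ℕ → Pt)
    (hcomp : ∀ n < k, p n ∈ rowOf X (h n) ∧ e n = compOf i (rowOf X (h n)) (p n))
    (hinj : ∀ n < k, ∀ m < k, e n = e m → n = m)
    (hedge : ∀ n < k, e n ≠ e ((n + 1) % k) ∧ a n ∈ e n ∧ b n ∈ e ((n + 1) % k) ∧
      cAdj i (a n) (b n))
    (hmax : ∀ n < k, h n ≤ h 0)
    (horient : ∀ w ∈ e (k - 1), ∀ w' ∈ e 1, w.1 < w'.1) : False := by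
  classical
  have hi : i = 1 ∨ i = 2 := by omega
  have hk0 : 0 < k := by omega
  have hmod : ∀ n, n < k → (n + 1) % k = if n = k - 1 then 0 else n + 1 := by
    intro n hn
    split
    · rw [show n + 1 = k by omega, Nat.mod_self]
    · exact Nat.mod_eq_of_lt (by omega)
  -- membership basics
  have subrow : ∀ n, n < k → e n ⊆ rowOf X (h n) := by
    intro n hn w hw
    rw [(hcomp n hn).2] at hw
    exact compOf_subset hw
  have subX : ∀ n, n < k → e n ⊆ X := fun n hn w hw => (subrow n hn hw).1
  have hgt : ∀ n, n < k → ∀ w ∈ e n, w.2 = h n := fun n hn w hw => (subrow n hn hw).2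
  -- heights of consecutive components differ by one
  have hstep1 : ∀ n, n < k → h ((n + 1) % k) = h n + 1 ∨ h ((n + 1) % k) = h n - 1 := by
    intro n hn
    have hn' : (n + 1) % k < k := Nat.mod_lt _ hk0
    obtain ⟨hne, ha, hb, hab⟩ := hedge n hn
    refine rowComp_adj_heights hi (hcomp n hn).1 (hcomp _ hn').1 ?_ ?_
    · rw [← (hcomp n hn).2, ← (hcomp _ hn').2]; exact hne
    · rw [← (hcomp n hn).2, ← (hcomp _ hn').2]
      exact ⟨a n, ha, b n, hb, hab⟩
  -- the top row
  set M := h 0 with hM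
  have h1M : h 1 = M - 1 := by
    have hs := hstep1 0 hk0
    rw [show (0 + 1) % k = 1 from Nat.mod_eq_of_lt (by omega)] at hs
    have := hmax 1 (by omega)
    omega
  have hkM : h (k - 1) = M - 1 := by
    have hkk : k - 1 < k := by omega
    have := hstep1 (k - 1) hkk
    rw [hmod (k - 1) hkk, if_pos rfl] at this
    have := hmax (k - 1) hkk
    omega
  -- maximal column point of e (k-1)
  have hne_k1 : (e (k - 1)).Nonempty := by
    refine ⟨p (k - 1), ?_⟩
    rw [(hcomp (k - 1) (by omega)).2]
    exact mem_compOf_self (hcomp (k - 1) (by omega)).1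
  obtain ⟨astar, hastar, hamax'⟩ :=
    Set.Finite.exists_maximalFor Prod.fst _ (hX.subset (subX (k - 1) (by omega))) hne_k1
  have hamax : ∀ w ∈ e (k - 1), w.1 ≤ astar.1 := by
    intro w hw
    rcases le_total w.1 astar.1 with hc | hc
    · exact hc
    · exact hamax' hw hc
  set x0 : ℤ := astar.1 + 1 with hx0
  have hastar2 : astar.2 = M - 1 := by rw [hgt (k - 1) (by omega) astar hastar, hkM]
  -- the gap point
  have hgap : ((x0, M - 1) : Pt) ∉ X := by
    intro hmem
    have hrow : ((x0, M - 1) : Pt) ∈ rowOf X (h (k - 1)) := by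
      rw [hkM]; exact ⟨hmem, rfl⟩
    have hadj : cAdj i astar ((x0, M - 1) : Pt) := by
      refine cAdj_of_coords hi ?_ ?_ ?_ ?_ ?_ <;> simp [hx0, hastar2] <;> try omega
    have : ((x0, M - 1) : Pt) ∈ e (k - 1) := by
      rw [(hcomp (k - 1) (by omega)).2]
      refine compOf_adj_closed ?_ hrow hadj
      rw [← (hcomp (k - 1) (by omega)).2]
      exact hastar
    have := hamax _ this
    simp [hx0] at this
  -- separation from e 1
  have hsep1 : ∀ w ∈ e 1, x0 + 1 ≤ w.1 := by
    intro w hw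
    have hne : e (k - 1) ≠ e 1 := fun heq => by
      have := hinj (k - 1) (by omega) 1 (by omega) heq
      omega
    have := horient astar hastar w hw
    have e1 : e (k - 1) = compOf i (rowOf X (M - 1)) (p (k - 1)) := by
      rw [← hkM]; exact (hcomp (k - 1) (by omega)).2
    have e2 : e 1 = compOf i (rowOf X (M - 1)) (p 1) := by
      rw [← h1M]; exact (hcomp 1 (by omega)).2
    have hp1 : p (k - 1) ∈ rowOf X (M - 1) := by
      rw [← hkM]; exact (hcomp (k - 1) (by omega)).1
    have hp2 : p 1 ∈ rowOf X (M - 1) := by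
      rw [← h1M]; exact (hcomp 1 (by omega)).1
    have hcne : compOf i (rowOf X (M - 1)) (p (k - 1)) ≠ compOf i (rowOf X (M - 1)) (p 1) := by
      rw [← e1, ← e2]; exact hne
    have hsep := rowComp_sep hi hp1 hp2 hcne (e1 ▸ hastar) (e2 ▸ hw)
    omega
  -- the loop data
  set D : CycData := ⟨k, a, b, h⟩ with hD
  have hpredlt : ∀ n, n < k → D.predk n < k := by
    intro n hn
    show (if n = 0 then k - 1 else n - 1) < k
    split <;> omega
  have hpredeq : ∀ n, n < k → (D.predk n + 1) % k = n := by
    intro n hn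
    show ((if n = 0 then k - 1 else n - 1) + 1) % k = n
    split
    · rw [show k - 1 + 1 = k by omega, Nat.mod_self]; omega
    · rw [show n - 1 + 1 = n by omega]; exact Nat.mod_eq_of_lt hn
  have hbmem : ∀ n, n < k → b (D.predk n) ∈ e n := by
    intro n hn
    have := (hedge (D.predk n) (hpredlt n hn)).2.2.1
    rwa [hpredeq n hn] at this
  have hb2 : ∀ n, n < D.k → (D.b (D.predk n)).2 = D.h n :=
    fun n hn => hgt n hn _ (hbmem n hn)
  have ha2 : ∀ n, n < D.k → (D.a n).2 = D.h n :=
    fun n hn => hgt n hn _ (hedge n hn).2.1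
  -- membership of the interior of each segment
  have habs : ∀ n : ℕ, ((D.lenN n : ℤ)) = |D.dN n - D.cN n| := by
    intro n
    rw [Int.abs_eq_natAbs]
    rfl
  have hcolb : ∀ n t, t ≤ D.lenN n →
      (D.cN n ≤ D.colAt n t ∧ D.colAt n t ≤ D.dN n) ∨
      (D.dN n ≤ D.colAt n t ∧ D.colAt n t ≤ D.cN n) := by
    intro n t ht
    have htZ : (t : ℤ) ≤ |D.dN n - D.cN n| := by
      rw [← habs n]; exact_mod_cast ht
    unfold CycData.colAt
    rcases lt_trichotomy (D.cN n) (D.dN n) with hlt | heq | hgt'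
    · rw [Int.sign_eq_one_of_pos (by omega)]
      have habs2 : |D.dN n - D.cN n| = D.dN n - D.cN n := abs_of_pos (by omega)
      left; omega
    · rw [heq, sub_self, Int.sign_zero]
      left; omega
    · rw [Int.sign_eq_neg_one_of_neg (by omega)]
      have habs2 : |D.dN n - D.cN n| = -(D.dN n - D.cN n) := abs_of_neg (by omega)
      right; omega
  have hptmem : ∀ n, n < k → ∀ t, t ≤ D.lenN n → D.ptN n t ∈ e n := by
    intro n hn t ht
    have hbn' : b (D.predk n) ∈ compOf i (rowOf X (h n)) (p n) :=
      (hcomp n hn).2 ▸ hbmem n hn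
    have han' : a n ∈ compOf i (rowOf X (h n)) (p n) :=
      (hcomp n hn).2 ▸ (hedge n hn).2.1
    rw [(hcomp n hn).2]
    rcases hcolb n t ht with ⟨h1, h2⟩ | ⟨h1, h2⟩
    · exact rowComp_interval hi hbn' han' h1 h2
    · exact rowComp_interval hi han' hbn' h1 h2
  have hcoldiff : ∀ n t, t < D.lenN n →
      D.colAt n (t + 1) - D.colAt n t = 1 ∨ D.colAt n (t + 1) - D.colAt n t = -1 := by
    intro n t ht
    have hsne : D.dN n - D.cN n ≠ 0 := by
      intro h0
      unfold CycData.lenN at ht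
      rw [h0] at ht
      simp at ht
    have hdiff : D.colAt n (t + 1) - D.colAt n t = (D.dN n - D.cN n).sign := by
      unfold CycData.colAt; push_cast; ring
    rcases lt_trichotomy (D.dN n - D.cN n) 0 with hc | hc | hc
    · right; rw [hdiff, Int.sign_eq_neg_one_of_neg hc]
    · omega
    · left; rw [hdiff, Int.sign_eq_one_of_pos hc]
  have hadjseg : ∀ n t, t < D.lenN n → cAdj i (D.ptN n t) (D.ptN n (t + 1)) := by
    intro n t ht
    have := hcoldiff n t ht
    refine cAdj_of_coords hi ?_ ?_ ?_ ?_ (fun _ => Or.inr rfl)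
    · show -1 ≤ D.colAt n t - D.colAt n (t + 1); omega
    · show D.colAt n t - D.colAt n (t + 1) ≤ 1; omega
    · show -1 ≤ h n - h n; omega
    · show h n - h n ≤ 1; omega
  have hstepX : ∀ u v, D.IsStep u v → u ∈ X ∧ v ∈ X ∧ cAdj i u v := by
    rintro u v (⟨n, hn, t, ht, rfl, rfl⟩ | ⟨n, hn, rfl, rfl⟩)
    · exact ⟨subX n hn (hptmem n hn t ht.le), subX n hn (hptmem n hn (t + 1) ht),
        hadjseg n t ht⟩
    · exact ⟨subX n hn (hedge n hn).2.1,
        subX ((n + 1) % k) (Nat.mod_lt _ hk0) (hedge n hn).2.2.1, (hedge n hn).2.2.2⟩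
  -- column facts at the top
  have hpred0 : D.predk 0 = k - 1 := by
    show (if 0 = 0 then k - 1 else 0 - 1) = k - 1
    simp
  have hbk1col : (b (D.predk 0)).1 ≤ x0 := by
    have hak1 : a (k - 1) ∈ e (k - 1) := (hedge (k - 1) (by omega)).2.1
    have hcols : (a (k - 1)).1 ≤ astar.1 := hamax _ hak1
    have hco := cAdj_coords hi (hedge (k - 1) (by omega)).2.2.2
    rw [hpred0]
    omega
  have hbk1mem : b (D.predk 0) ∈ e 0 := hbmem 0 hk0
  have ha0mem : a 0 ∈ e 0 := (hedge 0 hk0).2.1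
  have hb0mem : b 0 ∈ e 1 := by
    have := (hedge 0 hk0).2.2.1
    rwa [show (0 + 1) % k = 1 from Nat.mod_eq_of_lt (by omega)] at this
  have hb0col : x0 + 1 ≤ (b 0).1 := hsep1 _ hb0mem
  have ha0col : x0 ≤ (a 0).1 := by
    have hco := cAdj_coords hi (hedge 0 hk0).2.2.2
    omega
  -- the point (x0, M) lies in the top component
  have hx0M : ((x0, M) : Pt) ∈ e 0 := by
    have hbn' : b (D.predk 0) ∈ compOf i (rowOf X (h 0)) (p 0) :=
      (hcomp 0 hk0).2 ▸ hbk1mem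
    have han' : a 0 ∈ compOf i (rowOf X (h 0)) (p 0) :=
      (hcomp 0 hk0).2 ▸ ha0mem
    rw [(hcomp 0 hk0).2]
    exact rowComp_interval hi hbn' han' hbk1col ha0col
  -- side dichotomy for other top-row components
  have hside : ∀ n, n < k → n ≠ 0 → h n = M →
      (∀ w ∈ e n, w.1 ≤ x0 - 2) ∨ (∀ w ∈ e n, x0 + 2 ≤ w.1) := by
    intro n hn hn0 hnM
    have hne0 : e n ≠ e 0 := fun heq => hn0 (hinj n hn 0 hk0 heq)
    have en' : e n = compOf i (rowOf X M) (p n) := by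
      rw [← hnM]; exact (hcomp n hn).2
    have e0' : e 0 = compOf i (rowOf X M) (p 0) := by
      rw [hM]; exact (hcomp 0 hk0).2
    have pn' : p n ∈ rowOf X M := by rw [← hnM]; exact (hcomp n hn).1
    have p0' : p 0 ∈ rowOf X M := by rw [hM]; exact (hcomp 0 hk0).1
    have hcne : compOf i (rowOf X M) (p n) ≠ compOf i (rowOf X M) (p 0) := by
      rw [← en', ← e0']; exact hne0
    have hsepw : ∀ w ∈ e n, w.1 ≤ x0 - 2 ∨ x0 + 2 ≤ w.1 := by
      intro w hw
      have hs := rowComp_sep hi pn' p0' hcne (en' ▸ hw) (e0' ▸ hx0M)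
      have hfst : ((x0, M) : Pt).1 = x0 := rfl
      omega
    have han : a n ∈ e n := (hedge n hn).2.1
    rcases hsepw (a n) han with hL | hR
    · left
      intro w hw
      rcases hsepw w hw with h' | h'
      · exact h'
      · exfalso
        have hx0n : ((x0, M) : Pt) ∈ e n := by
          rw [en']
          exact rowComp_interval hi (en' ▸ han) (en' ▸ hw) (by omega) (by omega)
        refine hne0 ?_
        have m1 : ((x0, M) : Pt) ∈ compOf i (rowOf X M) (p n) := en' ▸ hx0n
        have m2 : ((x0, M) : Pt) ∈ compOf i (rowOf X M) (p 0) := e0' ▸ hx0M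
        rw [en', e0', compOf_eq_of_mem m1, compOf_eq_of_mem m2]
    · right
      intro w hw
      rcases hsepw w hw with h' | h'
      · exfalso
        have hx0n : ((x0, M) : Pt) ∈ e n := by
          rw [en']
          exact rowComp_interval hi (en' ▸ hw) (en' ▸ han) (by omega) (by omega)
        refine hne0 ?_
        have m1 : ((x0, M) : Pt) ∈ compOf i (rowOf X M) (p n) := en' ▸ hx0n
        have m2 : ((x0, M) : Pt) ∈ compOf i (rowOf X M) (p 0) := e0' ▸ hx0M
        rw [en', e0', compOf_eq_of_mem m1, compOf_eq_of_mem m2]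
      · exact h'
  -- successors of top-row components are one row down
  have hnext : ∀ n, n < k → h n = M → h ((n + 1) % k) = M - 1 := by
    intro n hn hnM
    have h1 := hstep1 n hn
    have h2 := hmax ((n + 1) % k) (Nat.mod_lt _ hk0)
    omega
  -- THE COUNT: the winding parity at the gap point is 1
  have hWg : D.W x0 (M - 1) = 1 := by
    classical
    set P : Pt → Prop := fun w => w.2 = M ∧ w.1 ≤ x0 with hPdef
    have hflip := D.sumSteps_flip P hk0 hb2 ha2
    have hsplit : D.W x0 (M - 1)
        = D.sumSteps (fun u v => ind (crossP x0 (M - 1) u v) + (ind (P u) + ind (P v))) := by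
      rw [D.sumSteps_add, hflip, add_zero]
      rfl
    rw [hsplit]
    unfold CycData.sumSteps
    have hinner : ∀ n ∈ Finset.range k,
        ((∑ t ∈ Finset.range (D.lenN n),
          (ind (crossP x0 (M - 1) (D.ptN n t) (D.ptN n (t + 1))) +
            (ind (P (D.ptN n t)) + ind (P (D.ptN n (t + 1)))))) +
          (ind (crossP x0 (M - 1) (a n) (b n)) + (ind (P (a n)) + ind (P (b n)))))
        = ind (crossP x0 (M - 1) (a n) (b n)) + (ind (P (a n)) + ind (P (b n))) := by
      intro n hn
      have hn' := Finset.mem_range.mp hn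
      have hz : (∑ t ∈ Finset.range (D.lenN n),
          (ind (crossP x0 (M - 1) (D.ptN n t) (D.ptN n (t + 1))) +
            (ind (P (D.ptN n t)) + ind (P (D.ptN n (t + 1)))))) = 0 := by
        refine Finset.sum_eq_zero fun t ht => ?_
        have ht' := Finset.mem_range.mp ht
        have hu : D.ptN n t ∈ e n := hptmem n hn' t ht'.le
        have hv : D.ptN n (t + 1) ∈ e n := hptmem n hn' (t + 1) ht'
        have hu2 : (D.ptN n t).2 = h n := rfl
        have hv2 : (D.ptN n (t + 1)).2 = h n := rfl
        have hdiff := hcoldiff n t ht'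
        have hu1 : (D.ptN n t).1 = D.colAt n t := rfl
        have hv1 : (D.ptN n (t + 1)).1 = D.colAt n (t + 1) := rfl
        by_cases hc : h n = M
        · refine ind_flip3 ?_
          unfold crossP xpairP
          rw [hPdef]
          beta_reduce
          rw [hu1, hv1, hu2, hv2, hc]
          constructor
          · rintro ⟨hx, -⟩
            omega
          · intro hx
            refine ⟨?_, by omega⟩
            omega
        · have hnM : h n ≤ M - 1 := by have := hmax n hn'; omega
          have hcr : ¬ crossP x0 (M - 1) (D.ptN n t) (D.ptN n (t + 1)) := by
            rintro ⟨hxp, hht⟩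
            have hyc : h n = M - 1 := by
              rw [hu2, hv2] at hht; omega
            rcases hxp with ⟨h1, h2⟩ | ⟨h1, h2⟩
            · have heq : D.ptN n t = ((x0, M - 1) : Pt) := Prod.ext h1 (hu2.trans hyc)
              exact hgap (heq ▸ subX n hn' hu)
            · have heq : D.ptN n (t + 1) = ((x0, M - 1) : Pt) := Prod.ext h2 (hv2.trans hyc)
              exact hgap (heq ▸ subX n hn' hv)
          rw [ind_neg hcr, ind_neg (fun hp' => hc (hu2 ▸ hp'.1)),
            ind_neg (fun hp' => hc (hv2 ▸ hp'.1))]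
          decide
      rw [hz, zero_add]
    rw [Finset.sum_congr rfl hinner]
    -- separate the P (b n) term and reindex it by the predecessor
    have hsplit2 : ∀ n ∈ Finset.range k,
        (ind (crossP x0 (M - 1) (a n) (b n)) + (ind (P (a n)) + ind (P (b n))))
        = (ind (crossP x0 (M - 1) (a n) (b n)) + ind (P (a n))) + ind (P (b n)) := by
      intro n _; ring
    rw [Finset.sum_congr rfl hsplit2, Finset.sum_add_distrib]
    rw [← D.sum_pred (fun m => ind (P (b m))) hk0]
    rw [← Finset.sum_add_distrib]
    -- now evaluate term by term
    have hval : ∀ n ∈ Finset.range k,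
        ((ind (crossP x0 (M - 1) (a n) (b n)) + ind (P (a n))) + ind (P (b (D.predk n))))
        = if n = 0 then 1 else 0 := by
      intro n hn
      have hn' := Finset.mem_range.mp hn
      by_cases hn0 : n = 0
      · subst hn0
        rw [if_pos rfl]
        have hPb : P (b (D.predk 0)) := by
          refine ⟨?_, hbk1col⟩
          rw [hgt 0 hk0 _ hbk1mem, hM]
        have ha02 : (a 0).2 = M := by rw [hgt 0 hk0 _ ha0mem, hM]
        have hb02 : (b 0).2 = M - 1 := by rw [hgt 1 (by omega) _ hb0mem, h1M]
        have hco := cAdj_coords hi (hedge 0 hk0).2.2.2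
        by_cases hA : (a 0).1 = x0
        · have hcr : crossP x0 (M - 1) (a 0) (b 0) := by
            refine ⟨Or.inl ⟨hA, by omega⟩, by omega⟩
          rw [ind_pos hcr, ind_pos ⟨ha02, by omega⟩, ind_pos hPb]
          decide
        · have hcr : ¬ crossP x0 (M - 1) (a 0) (b 0) := by
            rintro ⟨⟨h1, h2⟩ | ⟨h1, h2⟩, -⟩
            · exact hA h1
            · omega
          rw [ind_neg hcr, ind_neg (fun hp' => hA (by omega)), ind_pos hPb]
          decide
      · rw [if_neg hn0]
        have hbpn : b (D.predk n) ∈ e n := hbmem n hn'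
        have hbp2 : (b (D.predk n)).2 = h n := hgt n hn' _ hbpn
        have han : a n ∈ e n := (hedge n hn').2.1
        have han2 : (a n).2 = h n := hgt n hn' _ han
        by_cases hcM : h n = M
        · -- a top-row component other than the first one
          have hbn2 : (b n).2 = M - 1 := by
            rw [hgt ((n + 1) % k) (Nat.mod_lt _ hk0) _ (hedge n hn').2.2.1]
            exact hnext n hn' hcM
          rcases hside n hn' hn0 hcM with hL | hR
          · have hcr : ¬ crossP x0 (M - 1) (a n) (b n) := by
              rintro ⟨⟨h1, h2⟩ | ⟨h1, h2⟩, -⟩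
              · have := hL (a n) han; omega
              · have := hL (a n) han; omega
            rw [ind_neg hcr, ind_pos ⟨han2.trans hcM, by have := hL (a n) han; omega⟩,
              ind_pos ⟨hbp2.trans hcM, by have := hL _ hbpn; omega⟩]
            decide
          · have hcr : ¬ crossP x0 (M - 1) (a n) (b n) := by
              rintro ⟨⟨h1, h2⟩ | ⟨h1, h2⟩, -⟩
              · have := hR (a n) han; omega
              · have := hR (a n) han; omega
            rw [ind_neg hcr, ind_neg (fun hp' => by have := hR (a n) han; omega),
              ind_neg (fun hp' => by have := hR _ hbpn; omega)]
            decide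
        · -- a lower component
          have hbn2 : (b n).2 = h ((n + 1) % k) :=
            hgt ((n + 1) % k) (Nat.mod_lt _ hk0) _ (hedge n hn').2.2.1
          have hcr : ¬ crossP x0 (M - 1) (a n) (b n) := by
            rintro ⟨hxp, hht⟩
            have hup : h ((n + 1) % k) = M ∧ h n = M - 1 := by
              have := hstep1 n hn'
              have := hmax n hn'
              have := hmax ((n + 1) % k) (Nat.mod_lt _ hk0)
              rw [han2, hbn2] at hht
              omega
            have hmodn := hmod n hn'
            by_cases hkn : n = k - 1
            · -- next is the top component itself
              have hbk : b n = b (D.predk 0) := by rw [hpred0, hkn]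
              have hbncol : (b n).1 ≤ x0 := by rw [hbk]; exact hbk1col
              have hancol : (a n).1 ≤ x0 - 1 := by
                have := hamax (a n) (by rw [← hkn]; exact han)
                omega
              rcases hxp with ⟨h1, h2⟩ | ⟨h1, h2⟩ <;> omega
            · -- next is another top-row component
              have hnx : (n + 1) % k = n + 1 := by rw [hmodn, if_neg hkn]
              have hnx0 : (n + 1) % k ≠ 0 := by omega
              rcases hside ((n + 1) % k) (Nat.mod_lt _ hk0) hnx0 hup.1 with hL | hR
              · have := hL (b n) (hedge n hn').2.2.1
                rcases hxp with ⟨h1, h2⟩ | ⟨h1, h2⟩ <;> omega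
              · have := hR (b n) (hedge n hn').2.2.1
                rcases hxp with ⟨h1, h2⟩ | ⟨h1, h2⟩ <;> omega
          rw [ind_neg hcr, ind_neg (fun hp' => hcM (han2 ▸ hp'.1)),
            ind_neg (fun hp' => hcM (hbp2 ▸ hp'.1))]
          decide
    rw [Finset.sum_congr rfl hval, Finset.sum_ite_eq' (Finset.range k) 0 (fun _ => (1 : ZMod 2))]
    simp [Finset.mem_range, hk0]
  -- bounds of X and the escape to infinity
  obtain ⟨ux, hux⟩ := (hX.image Prod.fst).bddAbove
  obtain ⟨lx, hlx⟩ := (hX.image Prod.fst).bddBelow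
  obtain ⟨uy, huy⟩ := (hX.image Prod.snd).bddAbove
  obtain ⟨ly, hly⟩ := (hX.image Prod.snd).bddBelow
  have hbox : ∀ w ∈ X, lx ≤ w.1 ∧ w.1 ≤ ux ∧ ly ≤ w.2 ∧ w.2 ≤ uy := by
    intro w hw
    exact ⟨hlx (Set.mem_image_of_mem _ hw), hux (Set.mem_image_of_mem _ hw),
      hly (Set.mem_image_of_mem _ hw), huy (Set.mem_image_of_mem _ hw)⟩
  have hinf : (compOf j Xᶜ ((x0, M - 1) : Pt)).Infinite := hnohole _ hgap
  have hboxfin : (Set.Icc lx ux ×ˢ Set.Icc ly uy : Set Pt).Finite :=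
    (Set.finite_Icc lx ux).prod (Set.finite_Icc ly uy)
  have hnots : ¬ (compOf j Xᶜ ((x0, M - 1) : Pt) ⊆ Set.Icc lx ux ×ˢ Set.Icc ly uy) :=
    fun hsub => hinf (hboxfin.subset hsub)
  obtain ⟨q, hqcomp, hqbox⟩ := Set.not_subset.mp hnots
  have hq4 : q.1 < lx ∨ ux < q.1 ∨ q.2 < ly ∨ uy < q.2 := by
    simp only [Set.mem_prod, Set.mem_Icc, not_and_or, not_le] at hqbox
    rcases hqbox with hh | hh
    · omega
    · omega
  have hWq : D.W q.1 q.2 = 0 := D.W_far hi hk0 hstepX hb2 ha2 hbox hq4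
  have hWgq : D.W x0 (M - 1) = D.W q.1 q.2 := by
    have := D.W_chain hij hk0 hstepX hb2 ha2 (p := ((x0, M - 1) : Pt)) (q := q) hqcomp
    exact this
  rw [hWg, hWq] at hWgq
  exact absurd hWgq (by decide)
/- ------------------ reduction to the main lemma ------------------ -/

lemma reduce_oriented (i j : ℕ) (hij : (i = 1 ∧ j = 2) ∨ (i = 2 ∧ j = 1))
    (X : Set Pt) (hX : X.Finite) (hnohole : NoHole j X)
    (k : ℕ) (hk : 3 ≤ k) (e : ℕ → Set Pt)
    (hinj : ∀ n < k, ∀ m < k, e n = e m → n = m)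
    (hedge : ∀ n < k, rcgAdj i X (e n) (e ((n + 1) % k)))
    (hmaxc : ∀ n < k, ∀ hh : ℤ, ∀ pp : Pt, ∀ hh' : ℤ, ∀ pp' : Pt,
      (pp ∈ rowOf X hh ∧ e n = compOf i (rowOf X hh) pp) →
      (pp' ∈ rowOf X hh' ∧ e 0 = compOf i (rowOf X hh') pp') → hh ≤ hh')
    (horient : ∀ w ∈ e (k - 1), ∀ w' ∈ e 1, w.1 < w'.1) : False := by
  classical
  have hk0 : 0 < k := by omega
  -- choose heights, base points, transition points
  have hexh : ∀ n, ∃ hh pp, n < k → (pp ∈ rowOf X hh ∧ e n = compOf i (rowOf X hh) pp) := by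
    intro n
    by_cases hn : n < k
    · obtain ⟨hh, pp, h1, h2⟩ := (hedge n hn).1
      exact ⟨hh, pp, fun _ => ⟨h1, h2⟩⟩
    · exact ⟨0, (0, 0), fun hc => absurd hc hn⟩
  choose h p hp using hexh
  have hexab : ∀ n, ∃ aa bb : Pt, n < k →
      (aa ∈ e n ∧ bb ∈ e ((n + 1) % k) ∧ cAdj i aa bb) := by
    intro n
    by_cases hn : n < k
    · obtain ⟨aa, haa, bb, hbb, hab⟩ := (hedge n hn).2.2.2
      exact ⟨aa, bb, fun _ => ⟨haa, hbb, hab⟩⟩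
    · exact ⟨(0, 0), (0, 0), fun hc => absurd hc hn⟩
  choose a b hab using hexab
  refine main_contra i j hij X hX hnohole k hk e h p a b
    (fun n hn => hp n hn) hinj ?_ ?_ horient
  · intro n hn
    refine ⟨(hedge n hn).2.2.1, (hab n hn).1, (hab n hn).2.1, (hab n hn).2.2⟩
  · intro n hn
    exact hmaxc n hn (h n) (p n) (h 0) (p 0) (hp n hn) (hp 0 hk0)

theorem stmt7' (i j : ℕ) (hij : (i = 1 ∧ j = 2) ∨ (i = 2 ∧ j = 1))
    (X : Set Pt) (hX : X.Finite) (hnohole : NoHole j X) :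
    RCGAcyclic i X := by
  rintro ⟨k, r, hk3, hrc, hinjr, hpath, hwrap⟩
  classical
  have hi : i = 1 ∨ i = 2 := by omega
  have hk0 : 0 < k := by omega
  have hform : ∀ m, m < 2 * k → m % k = if m < k then m else m - k := by
    intro m hm
    by_cases hc : m < k
    · rw [if_pos hc]; exact Nat.mod_eq_of_lt hc
    · rw [if_neg hc, Nat.mod_eq_sub_mod (by omega)]
      exact Nat.mod_eq_of_lt (by omega)
  -- edges all around the cycle
  have hedge0 : ∀ n < k, rcgAdj i X (r n) (r ((n + 1) % k)) := by
    intro n hn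
    by_cases hkn : n = k - 1
    · subst hkn
      rw [show (k - 1 + 1) % k = 0 by rw [show k - 1 + 1 = k by omega, Nat.mod_self]]
      exact hwrap
    · rw [Nat.mod_eq_of_lt (by omega)]
      exact hpath n (by omega)
  -- choose heights for the original cycle
  have hexh : ∀ n, ∃ hh pp, n < k → (pp ∈ rowOf X hh ∧ r n = compOf i (rowOf X hh) pp) := by
    intro n
    by_cases hn : n < k
    · obtain ⟨hh, pp, h1, h2⟩ := hrc n hn
      exact ⟨hh, pp, fun _ => ⟨h1, h2⟩⟩
    · exact ⟨0, (0, 0), fun hc => absurd hc hn⟩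
  choose h0 p0 hp0 using hexh
  -- the top index
  obtain ⟨t, htk, htmax⟩ := Finset.exists_max_image (Finset.range k) h0
    ⟨0, Finset.mem_range.mpr hk0⟩
  have htk' : t < k := Finset.mem_range.mp htk
  have htmax' : ∀ m, m < k → h0 m ≤ h0 t := fun m hm => htmax m (Finset.mem_range.mpr hm)
  -- recentred cycle
  set σ : ℕ → ℕ := fun n => (t + n) % k with hσ
  have hσlt : ∀ n, σ n < k := fun n => Nat.mod_lt _ hk0
  have hσval : ∀ n, n < k → σ n = if t + n < k then t + n else t + n - k := by
    intro n hn
    exact hform (t + n) (by omega)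
  have hσ0 : σ 0 = t := by
    rw [hσval 0 hk0]
    split <;> omega
  have hσinj : ∀ n < k, ∀ m < k, σ n = σ m → n = m := by
    intro n hn m hm hnm
    rw [hσval n hn, hσval m hm] at hnm
    split at hnm <;> split at hnm <;> omega
  have hσsucc : ∀ n, n < k → (σ n + 1) % k = σ ((n + 1) % k) := by
    intro n hn
    have h1 := hσlt n
    have h2 : (σ n + 1) % k = if σ n + 1 < k then σ n + 1 else σ n + 1 - k :=
      hform _ (by omega)
    have h3 : (n + 1) % k = if n + 1 < k then n + 1 else n + 1 - k := hform _ (by omega)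
    rw [h2, h3]
    by_cases hc : n + 1 < k
    · rw [if_pos hc, hσval n hn, hσval (n + 1) hc]
      split <;> split <;> split <;> omega
    · rw [if_neg hc, show n + 1 - k = 0 by omega, hσ0, hσval n hn]
      split <;> split <;> omega
  have hedge1 : ∀ n < k, rcgAdj i X (r (σ n)) (r (σ ((n + 1) % k))) := by
    intro n hn
    rw [← hσsucc n hn]
    exact hedge0 (σ n) (hσlt n)
  -- heights along the recentred cycle
  have hstep1 : ∀ n < k, h0 (σ ((n + 1) % k)) = h0 (σ n) + 1 ∨
      h0 (σ ((n + 1) % k)) = h0 (σ n) - 1 := by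
    intro n hn
    have hed := hedge1 n hn
    have hm1 := hσlt n
    have hm2 := hσlt ((n + 1) % k)
    refine rowComp_adj_heights hi (hp0 (σ n) hm1).1 (hp0 (σ ((n + 1) % k)) hm2).1 ?_ ?_
    · rw [← (hp0 (σ n) hm1).2, ← (hp0 (σ ((n + 1) % k)) hm2).2]
      exact hed.2.2.1
    · rw [← (hp0 (σ n) hm1).2, ← (hp0 (σ ((n + 1) % k)) hm2).2]
      exact hed.2.2.2
  have hσne : r (σ 1) ≠ r (σ (k - 1)) := by
    intro heq
    have := hinjr (σ 1) (hσlt 1) (σ (k - 1)) (hσlt (k - 1)) heq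
    have := hσinj 1 (by omega) (k - 1) (by omega) this
    omega
  have h1v : h0 (σ 1) = h0 t - 1 := by
    have hs := hstep1 0 hk0
    rw [show (0 + 1) % k = 1 from Nat.mod_eq_of_lt (by omega), hσ0] at hs
    have := htmax' (σ 1) (hσlt 1)
    omega
  have hkv : h0 (σ (k - 1)) = h0 t - 1 := by
    have hs := hstep1 (k - 1) (by omega)
    rw [show (k - 1 + 1) % k = 0 by rw [show k - 1 + 1 = k by omega, Nat.mod_self], hσ0] at hs
    have := htmax' (σ (k - 1)) (hσlt (k - 1))
    omega
  -- total order between the two neighbours of the top component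
  set M1 : ℤ := h0 t - 1 with hM1
  have ek1 : r (σ (k - 1)) = compOf i (rowOf X M1) (p0 (σ (k - 1))) := by
    rw [← hkv]; exact (hp0 (σ (k - 1)) (hσlt (k - 1))).2
  have e1' : r (σ 1) = compOf i (rowOf X M1) (p0 (σ 1)) := by
    rw [← h1v]; exact (hp0 (σ 1) (hσlt 1)).2
  have pk1 : p0 (σ (k - 1)) ∈ rowOf X M1 := by
    rw [← hkv]; exact (hp0 (σ (k - 1)) (hσlt (k - 1))).1
  have p1' : p0 (σ 1) ∈ rowOf X M1 := by
    rw [← h1v]; exact (hp0 (σ 1) (hσlt 1)).1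
  have hcne : compOf i (rowOf X M1) (p0 (σ (k - 1))) ≠ compOf i (rowOf X M1) (p0 (σ 1)) := by
    rw [← ek1, ← e1']
    exact fun heq => hσne heq.symm
  rcases rowComp_total_order hi pk1 p1' hcne with hor | hor
  · -- correct orientation
    refine reduce_oriented i j hij X hX hnohole k hk3 (fun n => r (σ n)) ?_ hedge1 ?_ ?_
    · intro n hn m hm heq
      exact hσinj n hn m hm (hinjr (σ n) (hσlt n) (σ m) (hσlt m) heq)
    · intro n hn hh pp hh' pp' hd hd'
      have e1 : hh = h0 (σ n) :=
        rowComp_height_unique hd.1 hd.2 (hp0 (σ n) (hσlt n)).1 (hp0 (σ n) (hσlt n)).2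
      have e2 : hh' = h0 (σ 0) :=
        rowComp_height_unique hd'.1 hd'.2 (hp0 (σ 0) (hσlt 0)).1 (hp0 (σ 0) (hσlt 0)).2
      rw [e1, e2, hσ0]
      exact htmax' (σ n) (hσlt n)
    · intro w hw w' hw'
      exact hor w (ek1 ▸ hw) w' (e1' ▸ hw')
  · -- reversed orientation
    set τ : ℕ → ℕ := fun n => σ ((k - n % k) % k) with hτ
    have hrev : ∀ n, n < k → (k - n % k) % k = if n = 0 then 0 else k - n := by
      intro n hn
      rw [Nat.mod_eq_of_lt hn]
      by_cases hc : n = 0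
      · rw [if_pos hc, hc, Nat.sub_zero, Nat.mod_self]
      · rw [if_neg hc]
        exact Nat.mod_eq_of_lt (by omega)
    have hτlt : ∀ n, τ n < k := fun n => hσlt _
    have hτ0 : τ 0 = σ 0 := by
      show σ ((k - 0 % k) % k) = σ 0
      rw [hrev 0 hk0, if_pos rfl]
    have hτinj : ∀ n < k, ∀ m < k, τ n = τ m → n = m := by
      intro n hn m hm heq
      have h1 : (k - n % k) % k < k := Nat.mod_lt _ hk0
      have h2 : (k - m % k) % k < k := Nat.mod_lt _ hk0
      have := hσinj _ h1 _ h2 heq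
      rw [hrev n hn, hrev m hm] at this
      split at this <;> split at this <;> omega
    have hτedge : ∀ n < k, rcgAdj i X (r (τ n)) (r (τ ((n + 1) % k))) := by
      intro n hn
      have hsucc : (n + 1) % k = if n + 1 < k then n + 1 else 0 := by
        rw [hform (n + 1) (by omega)]
        split <;> omega
      by_cases hc0 : n = 0
      · -- (τ 0, τ 1) = (σ 0, σ (k-1)) ; use the edge σ (k-1) → σ 0
        subst hc0
        rw [hτ]
        beta_reduce
        rw [hsucc, if_pos (by omega), hrev 0 hk0, if_pos rfl, hrev 1 (by omega), if_neg one_ne_zero]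
        have := hedge1 (k - 1) (by omega)
        rw [show (k - 1 + 1) % k = 0 by rw [show k - 1 + 1 = k by omega, Nat.mod_self]] at this
        exact rcgAdj_symm this
      · by_cases hck : n = k - 1
        · -- (τ (k-1), τ 0) = (σ 1, σ 0) ; use the edge σ 0 → σ 1
          subst hck
          rw [hτ]
          beta_reduce
          rw [hsucc, if_neg (by omega), hrev 0 hk0, if_pos rfl,
            hrev (k - 1) (by omega), if_neg (by omega), show k - (k - 1) = 1 by omega]
          have := hedge1 0 hk0
          rw [show (0 + 1) % k = 1 from Nat.mod_eq_of_lt (by omega), hσ0] at this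
          rw [hσ0]
          exact rcgAdj_symm this
        · -- interior : (τ n, τ (n+1)) = (σ (k-n), σ (k-n-1))
          rw [hτ]
          beta_reduce
          rw [hsucc, if_pos (by omega), hrev n hn, if_neg hc0,
            hrev (n + 1) (by omega), if_neg (by omega)]
          have := hedge1 (k - n - 1) (by omega)
          rw [show (k - n - 1 + 1) % k = k - n by
            rw [show k - n - 1 + 1 = k - n by omega]; exact Nat.mod_eq_of_lt (by omega)] at this
          rw [show k - (n + 1) = k - n - 1 by omega]
          exact rcgAdj_symm this
    refine reduce_oriented i j hij X hX hnohole k hk3 (fun n => r (τ n)) ?_ hτedge ?_ ?_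
    · intro n hn m hm heq
      exact hτinj n hn m hm (hinjr (τ n) (hτlt n) (τ m) (hτlt m) heq)
    · intro n hn hh pp hh' pp' hd hd'
      have e1 : hh = h0 (τ n) :=
        rowComp_height_unique hd.1 hd.2 (hp0 (τ n) (hτlt n)).1 (hp0 (τ n) (hτlt n)).2
      have e2 : hh' = h0 (τ 0) :=
        rowComp_height_unique hd'.1 hd'.2 (hp0 (τ 0) (hτlt 0)).1 (hp0 (τ 0) (hτlt 0)).2
      rw [e1, e2, hτ0, hσ0]
      exact htmax' (τ n) (hτlt n)
    · -- τ (k-1) = σ 1 and τ 1 = σ (k-1)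
      have hτk1 : τ (k - 1) = σ 1 := by
        show σ ((k - (k - 1) % k) % k) = σ 1
        rw [hrev (k - 1) (by omega), if_neg (by omega), show k - (k - 1) = 1 by omega]
      have hτ1 : τ 1 = σ (k - 1) := by
        show σ ((k - 1 % k) % k) = σ (k - 1)
        rw [hrev 1 (by omega), if_neg one_ne_zero]
      intro w hw w' hw'
      beta_reduce at hw hw'
      rw [hτk1] at hw
      rw [hτ1] at hw'
      exact hor w' (ek1 ▸ hw') w (e1' ▸ hw)


/-- if the digital picture `(X,c_i,c_j)` has no hole, then the row
component graph `R(X,c_i)` is acyclic. -/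
theorem stmt7 (i j : ℕ) (hij : (i = 1 ∧ j = 2) ∨ (i = 2 ∧ j = 1))
    (X : Set Pt) (hX : X.Finite) (hnohole : NoHole j X) :
    RCGAcyclic i X := by
  exact stmt7' i j hij X hX hnohole
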